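/- In a system of n nodes with a set Z of faulty nodes, |Z| ≤ t and n > 3t: if each non-faulty node p receives a multiset values_p of n values such that values_p and values_q agree on at least n - |Z| common elements (the values of non-faulty nodes), and all elements of all values_p lie in [L, H], then the trimmed averages satisfy |AVG(values_p) - AVG(values_q)| ≤ (H - L) · t / (n - 2t) for all non-faulty p, q. -/

import Mathlib

lemma mono_gap (m : ℕ) (g : ℕ → ℕ) (hg : ∀ k, k + 1 < m → g k < g (k+1)) :
    ∀ k₁ k₂, k₁ ≤ k₂ → k₂ < m → g k₁ + (k₂ - k₁) ≤ g k₂ := by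
  intro k₁ k₂
  induction k₂ with
  | zero =>
    intro h12 _
    have hk0 : k₁ = 0 := by omega
    subst hk0; simp
  | succ k ih =>
    intro h12 h2m
    rcases Nat.eq_or_lt_of_le h12 with rfl | hlt
    · omega
    · have h1 := ih (by omega) (by omega)
      have h2 := hg k h2m
      omega

lemma sorted_getD_mono {l : List ℝ} (hl : l.Pairwise (· ≤ ·)) {i j : ℕ}
    (hij : i ≤ j) (hj : j < l.length) : l.getD i 0 ≤ l.getD j 0 := by
  rw [List.getD_eq_getElem _ _ (lt_of_le_of_lt hij hj), List.getD_eq_getElem _ _ hj]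
  exact hl.rel_get_of_le (a := ⟨i, lt_of_le_of_lt hij hj⟩) (b := ⟨j, hj⟩) hij

lemma sublist_getD_bounds {c l : List ℝ} (h : List.Sublist c l) (hs : l.Pairwise (· ≤ ·))
    {i : ℕ} (hi : i < c.length) :
    l.getD i 0 ≤ c.getD i 0 ∧ c.getD i 0 ≤ l.getD (i + (l.length - c.length)) 0 := by
  have hcl : c.length ≤ l.length := h.length_le
  set m := c.length with hm
  obtain ⟨f, hf⟩ := List.sublist_iff_exists_fin_orderEmbedding_get_eq.mp h
  set g : ℕ → ℕ := fun k => if hk : k < m then (f ⟨k, hk⟩ : ℕ) else 0 with hgdef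
  have hg : ∀ k, k + 1 < m → g k < g (k+1) := by
    intro k hk
    simp only [hgdef, dif_pos (by omega : k < m), dif_pos hk]
    exact f.strictMono (by simp [Fin.lt_def])
  have hlow : ∀ k (hk : k < m), k ≤ g k := by
    intro k hk
    have := mono_gap m g hg 0 k (Nat.zero_le _) hk
    omega
  have hhigh : ∀ k (hk : k < m), g k ≤ k + (l.length - m) := by
    intro k hk
    have h1 := mono_gap m g hg k (m-1) (by omega) (by omega)
    have h2 : g (m-1) < l.length := by
      simp only [hgdef, dif_pos (by omega : m - 1 < m)]
      exact (f ⟨m-1, by omega⟩).isLt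
    omega
  have hgi : g i = (f ⟨i, hi⟩ : ℕ) := by simp [hgdef, dif_pos hi]
  have hfi : (f ⟨i, hi⟩ : ℕ) < l.length := (f ⟨i, hi⟩).isLt
  have hceq : c.getD i 0 = l.getD (g i) 0 := by
    rw [List.getD_eq_getElem _ _ hi, hgi, List.getD_eq_getElem _ _ hfi]
    simpa [List.get_eq_getElem] using hf ⟨i, hi⟩
  constructor
  · rw [hceq]
    exact sorted_getD_mono hs (by have := hlow i hi; omega) (by rw [hgi]; exact hfi)
  · rw [hceq]
    exact sorted_getD_mono hs (hhigh i hi) (by omega)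

lemma sum_le_sum_getD : ∀ (x y : List ℝ), x.length = y.length →
    (∀ j, j < x.length → x.getD j 0 ≤ y.getD j 0) → x.sum ≤ y.sum := by
  intro x
  induction x with
  | nil =>
    intro y h _
    have : y = [] := List.length_eq_zero_iff.mp h.symm
    simp [this]
  | cons a x ih =>
    intro y h hp
    cases y with
    | nil => simp at h
    | cons b ys =>
      simp only [List.sum_cons]
      have h0 := hp 0 (by simp)
      simp only [List.getD_cons_zero] at h0
      have ht := ih ys (by simpa using h) (fun j hj => by
        have := hp (j+1) (by simpa using Nat.succ_lt_succ hj)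
        simpa using this)
      linarith

lemma getD_drop_take (l : List ℝ) (s m j : ℕ) (hj : j < m) (hsm : s + m ≤ l.length) :
    ((l.drop s).take m).getD j 0 = l.getD (s + j) 0 := by
  rw [List.getD_eq_getElem _ _ (by simp [List.length_take, List.length_drop]; omega),
      List.getD_eq_getElem _ _ (by omega)]
  simp [List.getElem_take, List.getElem_drop]

lemma seg_sum (l : List ℝ) (s m₁ m₂ : ℕ) :
    ((l.drop s).take (m₁ + m₂)).sum
      = ((l.drop s).take m₁).sum + ((l.drop (s + m₁)).take m₂).sum := by
  rw [List.take_add, List.sum_append, List.drop_drop, Nat.add_comm s m₁]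

lemma key_lemma (n t : ℕ) (ht : 3*t < n) (L H : ℝ) (a b c : List ℝ)
    (ha : a.Pairwise (· ≤ ·)) (hb : b.Pairwise (· ≤ ·))
    (hla : a.length = n) (hlb : b.length = n)
    (hc1 : List.Sublist c a) (hc2 : List.Sublist c b) (hcl : n - t ≤ c.length)
    (hbL : ∀ x ∈ b, L ≤ x) (hbH : ∀ x ∈ b, x ≤ H) :
    ((a.drop t).take (n-2*t)).sum ≤ ((b.drop t).take (n-2*t)).sum + (H - L) * t := by
  have hcn : c.length ≤ n := hla ▸ hc1.length_le
  -- pointwise comparison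
  have hXY : ((a.drop t).take (n-2*t)).sum ≤ ((b.drop (2*t)).take (n-2*t)).sum := by
    apply sum_le_sum_getD
    · simp only [List.length_take, List.length_drop, hla, hlb]; omega
    · intro j hj
      have hj' : j < n - 2*t := by
        have := hj
        simp only [List.length_take, List.length_drop, hla, lt_min_iff] at this
        exact this.1
      rw [getD_drop_take a t _ j hj' (by omega),
          getD_drop_take b (2*t) _ j hj' (by omega)]
      have h1 := (sublist_getD_bounds hc1 ha (i := t+j) (by omega)).1
      have h2 := (sublist_getD_bounds hc2 hb (i := t+j) (by omega)).2
      have h3 : b.getD (t+j + (b.length - c.length)) 0 ≤ b.getD (2*t + j) 0 :=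
        sorted_getD_mono hb (by omega) (by omega)
      calc a.getD (t+j) 0 ≤ c.getD (t+j) 0 := h1
        _ ≤ b.getD (t+j + (b.length - c.length)) 0 := h2
        _ ≤ b.getD (2*t+j) 0 := h3
  -- split sums
  have h2t : t + t = 2*t := by omega
  have e1 : ((b.drop t).take (t + (n - 2*t))).sum
      = ((b.drop t).take t).sum + ((b.drop (2*t)).take (n-2*t)).sum := by
    rw [seg_sum, h2t]
  have e2 : ((b.drop t).take ((n - 2*t) + t)).sum
      = ((b.drop t).take (n-2*t)).sum + ((b.drop (t + (n-2*t))).take t).sum := seg_sum ..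
  have hcomm : t + (n - 2*t) = (n - 2*t) + t := by omega
  have hnt : t + (n - 2*t) = n - t := by omega
  rw [hcomm, e2, hnt] at e1
  -- bounds on the two small segments
  have hlen1 : ((b.drop (n-t)).take t).length = t := by
    simp only [List.length_take, List.length_drop, hlb]; omega
  have hlen2 : ((b.drop t).take t).length = t := by
    simp only [List.length_take, List.length_drop, hlb]; omega
  have hmem : ∀ s m : ℕ, ∀ x ∈ (b.drop s).take m, x ∈ b := fun s m x hx =>
    List.mem_of_mem_drop (List.mem_of_mem_take hx)
  have hhigh : ((b.drop (n-t)).take t).sum ≤ (t : ℝ) * H := by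
    have := List.sum_le_card_nsmul ((b.drop (n-t)).take t) H
      (fun x hx => hbH x (hmem _ _ x hx))
    rwa [hlen1, nsmul_eq_mul] at this
  have hlow : (t : ℝ) * L ≤ ((b.drop t).take t).sum := by
    have := List.card_nsmul_le_sum ((b.drop t).take t) L
      (fun x hx => hbL x (hmem _ _ x hx))
    rwa [hlen2, nsmul_eq_mul] at this
  have : ((b.drop (2*t)).take (n-2*t)).sum
      = ((b.drop t).take (n-2*t)).sum + ((b.drop (n-t)).take t).sum
        - ((b.drop t).take t).sum := by linarith
  rw [this] at hXY
  have : (H - L) * t = (t:ℝ) * H - (t:ℝ) * L := by ring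
  linarith

/-- `M` with its `t` smallest and `t` largest elements removed (as a sorted list). -/
noncomputable def trimmed (t : ℕ) (M : Multiset ℝ) : List ℝ :=
  ((M.sort (· ≤ ·)).drop t).take (Multiset.card M - 2 * t)

/-- The trimmed average: the mean of `M` after removing the `t` smallest and `t` largest. -/
noncomputable def tAVG (t : ℕ) (M : Multiset ℝ) : ℝ :=
  (trimmed t M).sum / ((Multiset.card M : ℝ) - 2 * t)

theorem stmt_10 {ι : Type*} [Fintype ι] [DecidableEq ι] (n t : ℕ)
    (hn : Fintype.card ι = n) (ht : 3 * t < n)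
    (Z : Finset ι) (hZ : Z.card ≤ t) (L H : ℝ) (hLH : L ≤ H)
    (values : ι → Multiset ℝ)
    (hcard : ∀ p, p ∉ Z → Multiset.card (values p) = n)
    (hrange : ∀ p, p ∉ Z → ∀ y ∈ values p, y ∈ Set.Icc L H)
    (hcommon : ∀ p q, p ∉ Z → q ∉ Z →
      ∃ M : Multiset ℝ, n - Z.card ≤ Multiset.card M ∧ M ≤ values p ∧ M ≤ values q) :
    ∀ p q, p ∉ Z → q ∉ Z →
      |tAVG t (values p) - tAVG t (values q)| ≤ (H - L) * t / ((n : ℝ) - 2 * t) := by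
  intro p q hp hq
  obtain ⟨M, hM1, hMp, hMq⟩ := hcommon p q hp hq
  set a := (values p).sort (· ≤ ·) with hadef
  set b := (values q).sort (· ≤ ·) with hbdef
  set c := M.sort (· ≤ ·) with hcdef
  have hla : a.length = n := by rw [hadef, Multiset.length_sort, hcard p hp]
  have hlb : b.length = n := by rw [hbdef, Multiset.length_sort, hcard q hq]
  have hlc : c.length = Multiset.card M := by rw [hcdef, Multiset.length_sort]
  have hsub : ∀ (x : ι) (hx : x ∉ Z), M ≤ values x →
      List.Sublist c ((values x).sort (· ≤ ·)) := by
    intro x hx hMx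
    refine List.sublist_of_subperm_of_pairwise ?_ (Multiset.pairwise_sort _ _)
      (Multiset.pairwise_sort _ _)
    have : (c : Multiset ℝ) ≤ ((values x).sort (· ≤ ·) : Multiset ℝ) := by
      rw [hcdef, Multiset.sort_eq, Multiset.sort_eq]; exact hMx
    exact Multiset.coe_le.mp this
  have hca : List.Sublist c a := hsub p hp hMp
  have hcb : List.Sublist c b := hsub q hq hMq
  have hcl : n - t ≤ c.length := by omega
  have hmema : ∀ x ∈ a, x ∈ Set.Icc L H := by
    intro x hx; exact hrange p hp x (by rwa [hadef, Multiset.mem_sort] at hx)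
  have hmemb : ∀ x ∈ b, x ∈ Set.Icc L H := by
    intro x hx; exact hrange q hq x (by rwa [hbdef, Multiset.mem_sort] at hx)
  have k1 := key_lemma n t ht L H a b c (Multiset.pairwise_sort _ _)
    (Multiset.pairwise_sort _ _) hla hlb hca hcb hcl
    (fun x hx => (hmemb x hx).1) (fun x hx => (hmemb x hx).2)
  have k2 := key_lemma n t ht L H b a c (Multiset.pairwise_sort _ _)
    (Multiset.pairwise_sort _ _) hlb hla hcb hca hcl
    (fun x hx => (hmema x hx).1) (fun x hx => (hmema x hx).2)
  have hta : trimmed t (values p) = (a.drop t).take (n - 2*t) := by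
    rw [trimmed, hcard p hp]
  have htb : trimmed t (values q) = (b.drop t).take (n - 2*t) := by
    rw [trimmed, hcard q hq]
  have hD : (0:ℝ) < (n : ℝ) - 2 * t := by
    have : (2*t : ℕ) < n := by omega
    have := (Nat.cast_lt (α := ℝ)).mpr this
    push_cast at this ⊢
    linarith
  rw [tAVG, tAVG, hta, htb, hcard p hp, hcard q hq, div_sub_div_same, abs_div,
    abs_of_pos hD]
  rw [div_le_div_iff_of_pos_right hD]
  rw [abs_le]
  constructor <;> [linarith [k2]; linarith [k1]]
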